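/- Let a_n = |PW_n| (so a_0 = 1) and let i_n be the number of irreducible packed words of length n. Then for every n ≥ 1, a_n = Σ_{k=1}^{n} i_k · a_{n−k}. -/

import Mathlib

/-- The maximum letter of a word (a list of natural numbers), with `wmax [] = 0`. -/
def wmax (w : List ℕ) : ℕ := w.foldr max 0

/-- A word over the positive integers is packed if every letter from `1` to its maximum
occurs in it. -/
def IsPacked (w : List ℕ) : Prop :=
  (∀ x ∈ w, 0 < x) ∧ ∀ i : ℕ, 0 < i → i ≤ wmax w → i ∈ w

/-- `c` is a global descent of `w` (positions are 1-based, `1 ≤ c ≤ |w| - 1`). -/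
def GlobalDescent (w : List ℕ) (c : ℕ) : Prop :=
  1 ≤ c ∧ c + 1 ≤ w.length ∧ ∀ a ∈ w.take c, ∀ b ∈ w.drop c, b < a

/-- A packed word is irreducible if it is nonempty and has no global descent. -/
def Irred (w : List ℕ) : Prop :=
  IsPacked w ∧ w ≠ [] ∧ ∀ c, ¬ GlobalDescent w c

lemma le_wmax {w : List ℕ} {x : ℕ} (h : x ∈ w) : x ≤ wmax w := by
  induction w with
  | nil => simp at h
  | cons y t ih =>
    rw [List.mem_cons] at h
    rcases h with rfl | h
    · exact le_max_left _ _
    · exact le_trans (ih h) (le_max_right _ _)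

lemma wmax_le {w : List ℕ} {m : ℕ} (h : ∀ x ∈ w, x ≤ m) : wmax w ≤ m := by
  induction w with
  | nil => exact Nat.zero_le m
  | cons y t ih =>
    exact max_le (h y (by simp)) (ih fun x hx => h x (by simp [hx]))

lemma wmax_mem : ∀ {w : List ℕ}, 0 < wmax w → wmax w ∈ w
  | [], h => by simp [wmax] at h
  | y :: t, h => by
    have hw : wmax (y :: t) = max y (wmax t) := rfl
    rcases max_cases y (wmax t) with ⟨h1, _⟩ | ⟨h1, h2⟩
    · rw [hw, h1]; exact List.mem_cons_self
    · rw [hw, h1] at h ⊢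
      exact List.mem_cons_of_mem _ (wmax_mem h)

lemma wmax_append (u v : List ℕ) : wmax (u ++ v) = max (wmax u) (wmax v) := by
  induction u with
  | nil => simp [wmax]
  | cons y t ih =>
    show max y (wmax (t ++ v)) = max (max y (wmax t)) (wmax v)
    rw [ih, max_assoc]

lemma wmax_map_add {u : List ℕ} (h : u ≠ []) (m : ℕ) :
    wmax (u.map (· + m)) = wmax u + m := by
  induction u with
  | nil => simp at h
  | cons y t ih =>
    rcases eq_or_ne t [] with rfl | ht
    · simp [wmax]
    · show max (y + m) (wmax (t.map (· + m))) = max y (wmax t) + m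
      rw [ih ht, ← Nat.add_max_add_right]

lemma IsPacked.wmax_le_length {w : List ℕ} (h : IsPacked w) : wmax w ≤ w.length := by
  have hsub : Finset.Icc 1 (wmax w) ⊆ w.toFinset := by
    intro x hx
    rw [Finset.mem_Icc] at hx
    exact List.mem_toFinset.2 (h.2 x hx.1 hx.2)
  calc wmax w = (Finset.Icc 1 (wmax w)).card := by rw [Nat.card_Icc]; omega
    _ ≤ w.toFinset.card := Finset.card_le_card hsub
    _ ≤ w.length := w.toFinset_card_le

section GD
/-- extend a global descent of `x` to `x ++ y` when all of `x` dominates `y`. -/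
lemma gd_append_left {x y : List ℕ} {c : ℕ} (h : GlobalDescent x c)
    (hy : ∀ a ∈ x, ∀ b ∈ y, b < a) : GlobalDescent (x ++ y) c := by
  obtain ⟨h1, h2, h3⟩ := h
  have hc : c ≤ x.length := by omega
  refine ⟨h1, by simp; omega, ?_⟩
  intro a ha b hb
  rw [List.take_append_of_le_length hc] at ha
  rw [List.drop_append_of_le_length hc, List.mem_append] at hb
  rcases hb with hb | hb
  · exact h3 a ha b hb
  · exact hy a (List.mem_of_mem_take ha) b hb

/-- restrict a global descent of `x ++ y` with cut inside `x` to `x`. -/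
lemma gd_append_left_rev {x y : List ℕ} {c : ℕ} (h : GlobalDescent (x ++ y) c)
    (hc : c < x.length) : GlobalDescent x c := by
  obtain ⟨h1, h2, h3⟩ := h
  refine ⟨h1, by omega, ?_⟩
  intro a ha b hb
  have hc' : c ≤ x.length := le_of_lt hc
  refine h3 a ?_ b ?_
  · rw [List.take_append_of_le_length hc']; exact ha
  · rw [List.drop_append_of_le_length hc', List.mem_append]; exact Or.inl hb

/-- shifting by `m` preserves global descents (both directions). -/
lemma gd_map_add_iff {u : List ℕ} {m c : ℕ} :
    GlobalDescent (u.map (· + m)) c ↔ GlobalDescent u c := by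
  unfold GlobalDescent
  rw [List.length_map, ← List.map_take, ← List.map_drop]
  constructor
  · rintro ⟨h1, h2, h3⟩
    refine ⟨h1, h2, fun a ha b hb => ?_⟩
    have := h3 (a + m) (List.mem_map_of_mem ha) (b + m) (List.mem_map_of_mem hb)
    omega
  · rintro ⟨h1, h2, h3⟩
    refine ⟨h1, h2, fun a ha b hb => ?_⟩
    simp only [List.mem_map] at ha hb
    obtain ⟨a0, ha0, rfl⟩ := ha
    obtain ⟨b0, hb0, rfl⟩ := hb
    have := h3 a0 ha0 b0 hb0
    omega
end GD


def glue (u v : List ℕ) : List ℕ := u.map (· + wmax v) ++ v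

lemma glue_length (u v : List ℕ) : (glue u v).length = u.length + v.length := by
  simp [glue]

lemma glue_packed {u v : List ℕ} (hu : IsPacked u) (hune : u ≠ []) (hv : IsPacked v) :
    IsPacked (glue u v) := by
  set m := wmax v with hm
  have hwm : wmax (glue u v) = wmax u + m := by
    rw [glue, wmax_append, wmax_map_add hune, max_eq_left (by omega)]
  constructor
  · intro x hx
    rw [glue, List.mem_append] at hx
    rcases hx with hx | hx
    · simp only [List.mem_map] at hx
      obtain ⟨x0, hx0, rfl⟩ := hx
      have := hu.1 x0 hx0; omega
    · exact hv.1 x hx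
  · intro j hj1 hj2
    rw [hwm] at hj2
    rw [glue, List.mem_append]
    by_cases hjm : j ≤ m
    · exact Or.inr (hv.2 j hj1 hjm)
    · refine Or.inl ?_
      have : j - m ∈ u := hu.2 (j - m) (by omega) (by omega)
      exact List.mem_map.2 ⟨j - m, this, by omega⟩

lemma glue_no_small_gd {u v : List ℕ} (hu : Irred u) {c : ℕ} (hc : c < u.length) :
    ¬ GlobalDescent (glue u v) c := by
  intro h
  have h' : GlobalDescent (u.map (· + wmax v)) c :=
    gd_append_left_rev h (by simpa using hc)
  exact hu.2.2 c (gd_map_add_iff.1 h')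

lemma glue_gd_at {u v : List ℕ} (hu : IsPacked u) (hune : u ≠ []) (hvne : v ≠ []) :
    GlobalDescent (glue u v) u.length := by
  have hul : 1 ≤ u.length := List.length_pos_iff.2 hune
  refine ⟨hul, by simp [glue]; exact List.length_pos_iff.2 hvne, ?_⟩
  have ht : (glue u v).take u.length = u.map (· + wmax v) := by
    rw [glue, List.take_left' (by simp)]
  have hd : (glue u v).drop u.length = v := by
    rw [glue, List.drop_left' (by simp)]
  rw [ht, hd]
  intro a ha b hb
  simp only [List.mem_map] at ha
  obtain ⟨a0, ha0, rfl⟩ := ha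
  have h1 := hu.1 a0 ha0
  have h2 := le_wmax hb
  omega
lemma decomp {w : List ℕ} (hw : IsPacked w) (hne : w ≠ []) :
    ∃ u v, Irred u ∧ IsPacked v ∧ w = glue u v := by
  classical
  set n := w.length with hn
  have hn1 : 1 ≤ n := List.length_pos_iff.2 hne
  have hP : ∃ c, c = n ∨ GlobalDescent w c := ⟨n, Or.inl rfl⟩
  set c₀ := Nat.find hP with hc₀
  have hc₀P : c₀ = n ∨ GlobalDescent w c₀ := Nat.find_spec hP
  have hmin : ∀ c < c₀, ¬ (c = n ∨ GlobalDescent w c) := fun c hc => Nat.find_min hP hc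
  have hc₀n : c₀ ≤ n := Nat.find_le (Or.inl rfl)
  have h1c₀ : 1 ≤ c₀ := by
    by_contra h
    have hc0 : c₀ = 0 := by omega
    rcases hc₀P with h' | h'
    · omega
    · exact absurd h'.1 (by omega)
  set t := w.take c₀ with htdef
  set v := w.drop c₀ with hvdef
  have htv : t ++ v = w := List.take_append_drop c₀ w
  set m := wmax v with hmdef
  have ht_len : t.length = c₀ := by
    rw [htdef, List.length_take]; omega
  have hA : ∀ a ∈ t, ∀ b ∈ v, b < a := by
    rcases hc₀P with h' | h'
    · have : v = [] := by
        rw [hvdef, List.drop_eq_nil_iff]; omega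
      simp [this]
    · exact h'.2.2
  have hB : ∀ a ∈ t, m < a := by
    intro a ha
    rcases eq_or_ne v [] with hv0 | hv0
    · have : m = 0 := by simp [hmdef, hv0, wmax]
      have := hw.1 a (List.mem_of_mem_take ha)
      omega
    · obtain ⟨b, hb⟩ := List.exists_mem_of_ne_nil v hv0
      have hbm : 0 < m := lt_of_lt_of_le (hw.1 b (List.mem_of_mem_drop hb)) (le_wmax hb)
      exact hA a ha m (wmax_mem hbm)
  have hwmax_w : wmax w = max (wmax t) (wmax v) := by rw [← htv, wmax_append]
  have hvpacked : IsPacked v := by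
    constructor
    · exact fun b hb => hw.1 b (List.mem_of_mem_drop hb)
    · intro j hj1 hj2
      have hjw : j ∈ w := hw.2 j hj1 (by rw [hwmax_w]; exact le_trans hj2 (le_max_right _ _))
      rw [← htv, List.mem_append] at hjw
      rcases hjw with hjw | hjw
      · exact absurd (hB j hjw) (by omega)
      · exact hjw
  set u := t.map (· - m) with hudef
  have hut : u.map (· + m) = t := by
    rw [hudef, List.map_map]
    have : ∀ x ∈ t, ((· + m) ∘ (· - m)) x = id x := by
      intro x hx
      have := hB x hx
      simp; omega
    rw [List.map_congr_left this, List.map_id]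
  have hu_ne : u ≠ [] := by
    intro h
    have : u.length = 0 := by rw [h]; rfl
    rw [hudef, List.length_map, ht_len] at this
    omega
  have hwt_eq : wmax t = wmax u + m := by rw [← hut, wmax_map_add hu_ne]
  have hupacked : IsPacked u := by
    constructor
    · intro x hx
      rw [hudef, List.mem_map] at hx
      obtain ⟨x0, hx0, rfl⟩ := hx
      have := hB x0 hx0; omega
    · intro j hj1 hj2
      have hjm : j + m ≤ wmax w := by
        rw [hwmax_w]
        exact le_trans (by omega : j + m ≤ wmax t) (le_max_left _ _)
      have hjw : j + m ∈ w := hw.2 (j + m) (by omega) hjm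
      rw [← htv, List.mem_append] at hjw
      rcases hjw with hjw | hjw
      · exact List.mem_map.2 ⟨j + m, hjw, by omega⟩
      · exact absurd (le_wmax hjw) (by omega)
  have hu_nogd : ∀ c, ¬ GlobalDescent u c := by
    intro c hgd
    have hcu : c + 1 ≤ u.length := hgd.2.1
    have hcc : c < c₀ := by
      rw [hudef, List.length_map, ht_len] at hcu; omega
    have hgd_t : GlobalDescent t c := by
      rw [← hut]; exact gd_map_add_iff.2 hgd
    have hgd_w : GlobalDescent w c := by
      rw [← htv]; exact gd_append_left hgd_t hA
    exact hmin c hcc (Or.inr hgd_w)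
  refine ⟨u, v, ⟨hupacked, hu_ne, hu_nogd⟩, hvpacked, ?_⟩
  rw [glue, ← hmdef, hut, htv]
lemma glue_len_le {u v u' v' : List ℕ} (hu : Irred u) (hu' : Irred u')
    (h : glue u v = glue u' v') (hlt : u.length < u'.length) : False := by
  have hlen : u.length + v.length = u'.length + v'.length := by
    rw [← glue_length, ← glue_length, h]
  have hvne : v ≠ [] := by
    intro hv0
    rw [hv0] at hlen
    simp at hlen; omega
  have hgd : GlobalDescent (glue u v) u.length := glue_gd_at hu.1 hu.2.1 hvne
  rw [h] at hgd
  exact glue_no_small_gd hu' hlt hgd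

lemma glue_inj {u v u' v' : List ℕ} (hu : Irred u) (hu' : Irred u')
    (h : glue u v = glue u' v') : u = u' ∧ v = v' := by
  have hlen : u.length = u'.length := by
    rcases lt_trichotomy u.length u'.length with h' | h' | h'
    · exact absurd (glue_len_le hu hu' h h') not_false
    · exact h'
    · exact absurd (glue_len_le hu' hu h.symm h') not_false
  obtain ⟨h1, h2⟩ := List.append_inj h (by simp [hlen])
  subst h2
  have : u = u' := by
    exact List.map_injective_iff.2 (add_left_injective (wmax v)) h1
  exact ⟨this, rfl⟩

instance packedFinite (n : ℕ) : Finite {w : List ℕ // IsPacked w ∧ w.length = n} := by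
  have hbound : ∀ w : {w : List ℕ // IsPacked w ∧ w.length = n}, ∀ j : Fin n,
      w.1.get (Fin.cast w.2.2.symm j) < n + 1 := by
    intro w j
    have hmem : w.1.get (Fin.cast w.2.2.symm j) ∈ w.1 := w.1.get_mem _
    have := le_trans (le_wmax hmem) w.2.1.wmax_le_length
    omega
  apply Finite.of_injective
    (fun w : {w : List ℕ // IsPacked w ∧ w.length = n} =>
      fun j : Fin n => (⟨w.1.get (Fin.cast w.2.2.symm j), hbound w j⟩ : Fin (n + 1)))
  intro w w' h
  apply Subtype.ext
  apply List.ext_get (by rw [w.2.2, w'.2.2])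
  intro idx h1 h2
  have := congrFun h ⟨idx, by rw [← w.2.2]; exact h1⟩
  exact congrArg Fin.val this

instance irredFinite (n : ℕ) : Finite {w : List ℕ // Irred w ∧ w.length = n} := by
  apply Finite.of_injective
    (fun w : {w : List ℕ // Irred w ∧ w.length = n} =>
      (⟨w.1, w.2.1.1, w.2.2⟩ : {w : List ℕ // IsPacked w ∧ w.length = n}))
  intro w w' h
  simpa [Subtype.ext_iff] using h

/-- `a n` is the number of packed words of length `n` (so `a 0 = 1`). -/
noncomputable def a (n : ℕ) : ℕ := Nat.card {w : List ℕ // IsPacked w ∧ w.length = n}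

/-- `i n` is the number of irreducible packed words of length `n`. -/
noncomputable def i (n : ℕ) : ℕ := Nat.card {w : List ℕ // Irred w ∧ w.length = n}

theorem card_packedWords_recurrence (n : ℕ) (hn : 1 ≤ n) :
    a n = ∑ k ∈ Finset.Icc 1 n, i k * a (n - k) := by
  classical
  let B : ℕ → Type := fun k =>
    {u : List ℕ // Irred u ∧ u.length = k} × {v : List ℕ // IsPacked v ∧ v.length = n - k}
  let F : ((k : ↥(Finset.Icc 1 n)) × B k.1) → {w : List ℕ // IsPacked w ∧ w.length = n} :=
    fun x =>
      ⟨glue x.2.1.1 x.2.2.1, glue_packed x.2.1.2.1.1 x.2.1.2.1.2.1 x.2.2.2.1, by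
        have hk := Finset.mem_Icc.1 x.1.2
        rw [glue_length, x.2.1.2.2, x.2.2.2.2]; omega⟩
  have hinj : Function.Injective F := by
    rintro ⟨⟨k, hk⟩, ⟨u, hu⟩, ⟨v, hv⟩⟩ ⟨⟨k', hk'⟩, ⟨u', hu'⟩, ⟨v', hv'⟩⟩ h
    have hg : glue u v = glue u' v' := congrArg Subtype.val h
    obtain ⟨h1, h2⟩ := glue_inj hu.1 hu'.1 hg
    subst h1; subst h2
    have hkk : k = k' := hu.2.symm.trans hu'.2
    subst hkk
    rfl
  have hsurj : Function.Surjective F := by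
    rintro ⟨w, hw, hlen⟩
    have hne : w ≠ [] := by
      intro h; rw [h] at hlen; simp at hlen; omega
    obtain ⟨u, v, hu, hv, hwe⟩ := decomp hw hne
    have hul : 1 ≤ u.length := List.length_pos_iff.2 hu.2.1
    have hlen' : u.length + v.length = n := by rw [← glue_length, ← hwe, hlen]
    refine ⟨⟨⟨u.length, Finset.mem_Icc.2 ⟨hul, by omega⟩⟩, ⟨u, hu, rfl⟩, ⟨v, hv, by show v.length = n - u.length; omega⟩⟩, ?_⟩
    exact Subtype.ext hwe.symm
  have hcard := Nat.card_eq_of_bijective F ⟨hinj, hsurj⟩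
  letI : ∀ k : ↥(Finset.Icc 1 n), Fintype (B k.1) := fun k => Fintype.ofFinite _
  calc a n = Nat.card ((k : ↥(Finset.Icc 1 n)) × B k.1) := hcard.symm
    _ = ∑ k : ↥(Finset.Icc 1 n), Fintype.card (B k.1) := by
        rw [Nat.card_eq_fintype_card, Fintype.card_sigma]
    _ = ∑ k : ↥(Finset.Icc 1 n), i k.1 * a (n - k.1) := by
        apply Finset.sum_congr rfl
        intro k _
        rw [← Nat.card_eq_fintype_card, Nat.card_prod]
        rfl
    _ = ∑ k ∈ Finset.Icc 1 n, i k * a (n - k) := Finset.sum_coe_sort (Finset.Icc 1 n) (fun k => i k * a (n - k))
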